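/- arXiv:2504.13670 — 2 statements merged into one kernel-verified Lean document; each statement's English description precedes it below -/
import Mathlib

section
/- For real numbers a in [0, Δ] with Δ > 0 and D > 0 satisfying Δ < D·√(1/3) (so that 6a² < 2D² for all a in [0,Δ]), the function S(a) = 1/(a² + D²) + 1/((Δ−a)² + D²) attains its maximum on [0, Δ] uniquely at a = Δ/2. -/
/-- The single-gap objective `S(a) = 1/(a²+D²) + 1/((Δ−a)²+D²)` attains its maximum
on `[0, Δ]` uniquely at `a = Δ/2`, given `3Δ² < D²`. -/
theorem stmt_0 (Δ D : ℝ) (hΔ : 0 < Δ) (hD : 0 < D) (h : 3 * Δ ^ 2 < D ^ 2) :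
    ∀ a ∈ Set.Icc (0 : ℝ) Δ, a ≠ Δ / 2 →
      1 / (a ^ 2 + D ^ 2) + 1 / ((Δ - a) ^ 2 + D ^ 2) <
        1 / ((Δ / 2) ^ 2 + D ^ 2) + 1 / ((Δ - Δ / 2) ^ 2 + D ^ 2) := by
  intro a ha hne
  have hP : (0:ℝ) < a ^ 2 + D ^ 2 := by positivity
  have hQ : (0:ℝ) < (Δ - a) ^ 2 + D ^ 2 := by positivity
  have hR : (0:ℝ) < (Δ / 2) ^ 2 + D ^ 2 := by positivity
  have hR2 : (0:ℝ) < (Δ - Δ / 2) ^ 2 + D ^ 2 := by positivity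
  have ht : (0:ℝ) < (a - Δ / 2) ^ 2 := by
    have := sub_ne_zero.mpr hne
    positivity
  have hkey : (0:ℝ) < (a - Δ / 2) ^ 2 + D ^ 2 - 3 * (Δ / 2) ^ 2 := by
    nlinarith [sq_nonneg (a - Δ / 2)]
  rw [div_add_div _ _ hP.ne' hQ.ne', div_add_div _ _ hR.ne' hR2.ne',
    div_lt_div_iff₀ (mul_pos hP hQ) (mul_pos hR hR2)]
  nlinarith [mul_pos ht hkey, sq_nonneg (a - Δ / 2), mul_pos (mul_pos ht hkey) hR]
end

section
/- Let N be a positive integer, D > 0, Δ > 0 with (N−1)Δ < D·√(1/3). Among all real sequences x_1 < x_2 < ⋯ < x_N with x_{n} − x_{n−1} ≥ Δ for all n, the sum ∑_{n=1}^N 1/√((x_n − x_b)² + D²) is maximized by the uniform symmetric arrangement x_n = x_b − (N−1)Δ/2 + (n−1)Δ. -/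
private lemma mono_aux (D s t : ℝ) (hD : 0 < D) (h : s^2 ≤ t^2) :
    1 / Real.sqrt (t^2 + D^2) ≤ 1 / Real.sqrt (s^2 + D^2) := by
  have h1 : (0:ℝ) < s^2 + D^2 := by positivity
  have h2 : (0:ℝ) < Real.sqrt (s^2 + D^2) := Real.sqrt_pos.mpr h1
  exact one_div_le_one_div_of_le h2 (Real.sqrt_le_sqrt (by linarith))

set_option maxHeartbeats 1000000 in
private lemma key_aux (D p m : ℝ) (hD : 0 < D) (h12 : 12 * p^2 < D^2) :
    1 / Real.sqrt ((m - p)^2 + D^2) + 1 / Real.sqrt ((m + p)^2 + D^2) ≤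
      2 / Real.sqrt (p^2 + D^2) := by
  set A : ℝ := (m + p)^2 + D^2 with hAdef
  set B : ℝ := (m - p)^2 + D^2 with hBdef
  set C : ℝ := p^2 + D^2 with hCdef
  have hA0 : 0 < A := by positivity
  have hB0 : 0 < B := by positivity
  have hC0 : 0 < C := by positivity
  set α : ℝ := Real.sqrt A with hαdef
  set β : ℝ := Real.sqrt B with hβdef
  set γ : ℝ := Real.sqrt C with hγdef
  have hα : 0 < α := Real.sqrt_pos.mpr hA0
  have hβ : 0 < β := Real.sqrt_pos.mpr hB0
  have hγ : 0 < γ := Real.sqrt_pos.mpr hC0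
  have hA : α^2 = A := Real.sq_sqrt hA0.le
  have hB : β^2 = B := Real.sq_sqrt hB0.le
  have hC : γ^2 = C := Real.sq_sqrt hC0.le
  have hq : 12 * p^2 ≤ D^2 := h12.le
  have hp2 : p^2 ≤ D^2/12 := by linarith
  have hp4 : p^4 ≤ D^4/144 := by
    linarith [mul_nonneg (by linarith : (0:ℝ) ≤ D^2/12 - p^2) (by positivity : (0:ℝ) ≤ D^2/12 + p^2)]
  have hp6 : p^6 ≤ D^6/1728 := by
    linarith [mul_le_mul hp4 hp2 (by positivity : (0:ℝ) ≤ p^2) (by positivity : (0:ℝ) ≤ D^4/144)]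
  have e1pos : 0 ≤ 4*A*B - C*(A+B) := by
    have hAB : 4*A*B - C*(A+B) = 2*D^4 + 4*p^2*D^2 + 2*p^4 + 6*m^2*D^2 - 10*m^2*p^2 + 4*m^4 := by
      rw [hAdef, hBdef, hCdef]; ring
    have t1 : 0 ≤ m^2*(6*D^2 - 10*p^2) :=
      mul_nonneg (sq_nonneg m) (by linarith [sq_nonneg p])
    have n1 : (0:ℝ) ≤ D^4 := by positivity
    have n2 : (0:ℝ) ≤ p^2*D^2 := by positivity
    have n3 : (0:ℝ) ≤ p^4 := by positivity
    have n4 : (0:ℝ) ≤ m^4 := by positivity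
    have n5 : (0:ℝ) ≤ m^2*D^2 := by positivity
    rw [hAB]
    nlinarith [t1, n1, n2, n3, n4, n5]
  have hE : 0 ≤ 16*D^6 - 48*p^4*D^2 - 32*p^6 + 48*m^2*D^4 - 96*m^2*p^2*D^2 + 112*m^2*p^4
      + 48*m^4*D^2 - 80*m^4*p^2 + 16*m^6 := by
    have c1 : p^4*D^2 ≤ D^6/144 := by linarith [mul_le_mul_of_nonneg_right hp4 (sq_nonneg D)]
    have c2 : m^2*p^2*D^2 ≤ m^2*D^4/12 := by
      linarith [mul_le_mul_of_nonneg_left hp2 (by positivity : (0:ℝ) ≤ m^2*D^2)]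
    have c3 : m^4*p^2 ≤ m^4*D^2/12 := by
      linarith [mul_le_mul_of_nonneg_left hp2 (by positivity : (0:ℝ) ≤ m^4)]
    have n1 : (0:ℝ) ≤ m^2*D^4 := by positivity
    have n2 : (0:ℝ) ≤ m^4*D^2 := by positivity
    have n3 : (0:ℝ) ≤ m^6 := by positivity
    have n4 : (0:ℝ) ≤ m^2*p^4 := by positivity
    have n5 : (0:ℝ) ≤ D^6 := by positivity
    linarith
  have e2 : 4*C^2*(A*B) ≤ (4*A*B - C*(A+B))^2 := by
    have expand : (4*A*B - C*(A+B))^2 - 4*C^2*(A*B) =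
        m^2 * (16*D^6 - 48*p^4*D^2 - 32*p^6 + 48*m^2*D^4 - 96*m^2*p^2*D^2 + 112*m^2*p^4
          + 48*m^4*D^2 - 80*m^4*p^2 + 16*m^6) := by
      rw [hAdef, hBdef, hCdef]; ring
    have := mul_nonneg (sq_nonneg m) hE
    linarith [expand, this]
  have hw : (α*β)^2 = A*B := by rw [mul_pow, hA, hB]
  have step : 2*C*(α*β) ≤ 4*A*B - C*(A+B) := by
    have h1 : (2*C*(α*β))^2 ≤ (4*A*B - C*(A+B))^2 := by
      calc (2*C*(α*β))^2 = 4*C^2*(A*B) := by rw [mul_pow, mul_pow, hw]; ring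
        _ ≤ _ := e2
    nlinarith [mul_nonneg (mul_nonneg (by norm_num : (0:ℝ) ≤ 2) hC0.le) (mul_pos hα hβ).le, e1pos]
  have main : γ*(α+β) ≤ 2*(α*β) := by
    have h1 : (γ*(α+β))^2 ≤ (2*(α*β))^2 := by
      have : (γ*(α+β))^2 = C*(A+B) + 2*C*(α*β) := by
        have : (γ*(α+β))^2 = γ^2*(α^2+β^2) + 2*γ^2*(α*β) := by ring
        rw [this, hA, hB, hC]
      rw [this]
      have : (2*(α*β))^2 = 4*(A*B) := by rw [mul_pow, hw]; ring
      rw [this]; linarith [step]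
    nlinarith [mul_nonneg hγ.le (by positivity : (0:ℝ) ≤ α + β), mul_pos hα hβ]
  rw [div_add_div _ _ hβ.ne' hα.ne', div_le_div_iff₀ (by positivity) hγ]
  nlinarith [main, mul_pos hα hβ]

private lemma pair_aux (D p a b : ℝ) (hD : 0 < D) (hp : 0 ≤ p) (h12 : 12*p^2 < D^2)
    (hab : 2*p ≤ b - a) :
    1 / Real.sqrt (a^2 + D^2) + 1 / Real.sqrt (b^2 + D^2) ≤ 2 / Real.sqrt (p^2 + D^2) := by
  by_cases ha : a^2 < p^2
  · have ha' : -p < a := by nlinarith [sq_nonneg (a + p), hp]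
    have hb : a + 2*p ≤ b := by linarith
    have h1 : 1 / Real.sqrt (b^2 + D^2) ≤ 1 / Real.sqrt ((a + 2*p)^2 + D^2) := by
      apply mono_aux D _ _ hD; nlinarith
    have h2 := key_aux D p (a + p) hD h12
    have e1 : (a + p) - p = a := by ring
    have e2 : (a + p) + p = a + 2*p := by ring
    rw [e1, e2] at h2
    linarith
  · by_cases hb : b^2 < p^2
    · have hb' : b < p := by nlinarith [sq_nonneg (b - p), hp]
      have ha2 : a ≤ b - 2*p := by linarith
      have h1 : 1 / Real.sqrt (a^2 + D^2) ≤ 1 / Real.sqrt ((b - 2*p)^2 + D^2) := by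
        apply mono_aux D _ _ hD; nlinarith
      have h2 := key_aux D p (b - p) hD h12
      have e1 : (b - p) - p = b - 2*p := by ring
      have e2 : (b - p) + p = b := by ring
      rw [e1, e2] at h2
      linarith
    · push_neg at ha hb
      have h1 : 1 / Real.sqrt (a^2 + D^2) ≤ 1 / Real.sqrt (p^2 + D^2) := mono_aux D _ _ hD ha
      have h2 : 1 / Real.sqrt (b^2 + D^2) ≤ 1 / Real.sqrt (p^2 + D^2) := mono_aux D _ _ hD hb
      have : (2:ℝ) / Real.sqrt (p^2 + D^2) = 1 / Real.sqrt (p^2 + D^2) + 1 / Real.sqrt (p^2 + D^2) := by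
        ring
      rw [this]; linarith

private lemma gaps_aux (N : ℕ) (Δ : ℝ) (x : ℕ → ℝ) (hx : ∀ n, n + 1 < N → Δ ≤ x (n + 1) - x n) :
    ∀ i k, i + k < N → (k:ℝ) * Δ ≤ x (i + k) - x i := by
  intro i k
  induction k with
  | zero => intro _; simp
  | succ k ih =>
    intro h
    have h1 := ih (by omega)
    have h2 := hx (i + k) (by omega)
    have : i + (k + 1) = (i + k) + 1 := by omega
    rw [this]
    push_cast
    linarith

/-- Among antenna placements `x 0 < x 1 < ⋯ < x (N-1)` with minimum spacing `Δ`,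
the sum of inverse distances to the user is maximized by the uniform symmetric
arrangement centered at `x_b` with spacing `Δ`, provided `3((N−1)Δ)² < D²`. -/
theorem stmt_3 (N : ℕ) (hN : 0 < N) (D Δ xb : ℝ) (hD : 0 < D) (hΔ : 0 < Δ)
    (hcond : 3 * (((N : ℝ) - 1) * Δ) ^ 2 < D ^ 2)
    (x : ℕ → ℝ) (hx : ∀ n, n + 1 < N → Δ ≤ x (n + 1) - x n) :
    ∑ n ∈ Finset.range N, 1 / Real.sqrt ((x n - xb) ^ 2 + D ^ 2) ≤
      ∑ n ∈ Finset.range N,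
        1 / Real.sqrt (((xb - ((N : ℝ) - 1) * Δ / 2 + (n : ℝ) * Δ) - xb) ^ 2 + D ^ 2) := by
  -- abbreviations
  set g : ℕ → ℝ := fun n => 1 / Real.sqrt ((x n - xb) ^ 2 + D ^ 2) with hg
  set h : ℕ → ℝ := fun n => 1 / Real.sqrt (((n:ℝ) * Δ - ((N:ℝ) - 1) * Δ / 2) ^ 2 + D ^ 2) with hh
  have hrhs : ∑ n ∈ Finset.range N,
      1 / Real.sqrt (((xb - ((N : ℝ) - 1) * Δ / 2 + (n : ℝ) * Δ) - xb) ^ 2 + D ^ 2)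
      = ∑ n ∈ Finset.range N, h n := by
    apply Finset.sum_congr rfl
    intro n _
    have : ((xb - ((N : ℝ) - 1) * Δ / 2 + (n : ℝ) * Δ) - xb) ^ 2
        = ((n:ℝ) * Δ - ((N:ℝ) - 1) * Δ / 2) ^ 2 := by ring
    rw [hh, this]
  rw [hrhs]
  -- key per-index inequality
  have keyn : ∀ n, n < N → g n + g (N - 1 - n) ≤ h n + h (N - 1 - n) := by
    intro n hn
    set k := N - 1 - n with hk
    have hkcast : ((k:ℕ):ℝ) = (N:ℝ) - 1 - (n:ℝ) := by
      have h1 : k + n + 1 = N := by omega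
      have h2 : ((k:ℝ) + (n:ℝ) + 1) = (N:ℝ) := by exact_mod_cast congrArg (Nat.cast : ℕ → ℝ) h1
      linarith
    have hncast : (n:ℝ) ≤ (N:ℝ) - 1 := by
      have : ((n:ℝ) + 1) ≤ (N:ℝ) := by exact_mod_cast hn
      linarith
    have hn0 : (0:ℝ) ≤ (n:ℝ) := Nat.cast_nonneg n
    -- h values
    have hhn : h n = 1 / Real.sqrt (((n:ℝ) * Δ - ((N:ℝ) - 1) * Δ / 2) ^ 2 + D ^ 2) := rfl
    have hhk : h k = 1 / Real.sqrt (((n:ℝ) * Δ - ((N:ℝ) - 1) * Δ / 2) ^ 2 + D ^ 2) := by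
      rw [hh]
      have : ((k:ℝ) * Δ - ((N:ℝ) - 1) * Δ / 2) ^ 2
          = ((n:ℝ) * Δ - ((N:ℝ) - 1) * Δ / 2) ^ 2 := by
        rw [hkcast]; ring
      simp only [this]
    rcases le_or_gt n k with hle | hlt
    · -- p = ((N-1) - 2n) Δ / 2 ≥ 0
      set p : ℝ := (((N:ℝ) - 1) - 2*(n:ℝ)) * Δ / 2 with hpdef
      have hb2 : 0 ≤ ((N:ℝ) - 1) - 2*(n:ℝ) := by
        have hnk : (n:ℝ) ≤ (k:ℝ) := by exact_mod_cast hle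
        rw [hkcast] at hnk
        linarith
      have hp0 : 0 ≤ p := by
        rw [hpdef]; linarith [mul_nonneg hb2 hΔ.le]
      have h12 : 12 * p^2 < D^2 := by
        have hb1 : ((N:ℝ) - 1) - 2*(n:ℝ) ≤ (N:ℝ) - 1 := by linarith
        have hm1 : (((N:ℝ) - 1) - 2*(n:ℝ))*Δ ≤ ((N:ℝ)-1)*Δ := mul_le_mul_of_nonneg_right hb1 hΔ.le
        have hm0 : 0 ≤ (((N:ℝ) - 1) - 2*(n:ℝ))*Δ := mul_nonneg hb2 hΔ.le
        rw [hpdef]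
        nlinarith [mul_self_le_mul_self hm0 hm1]
      have hgap : 2*p ≤ (x k - xb) - (x n - xb) := by
        have := gaps_aux N Δ x hx n (k - n) (by omega)
        have hc : ((k - n : ℕ):ℝ) = (k:ℝ) - (n:ℝ) := by
          have : k - n + n = k := by omega
          have := congrArg (Nat.cast : ℕ → ℝ) this
          push_cast at this
          linarith
        have heq : n + (k - n) = k := by omega
        rw [heq, hc, hkcast] at this
        rw [hpdef]
        linarith
      have := pair_aux D p (x n - xb) (x k - xb) hD hp0 h12 hgap
      have hpsq : p^2 = ((n:ℝ) * Δ - ((N:ℝ) - 1) * Δ / 2) ^ 2 := by rw [hpdef]; ring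
      rw [hpsq] at this
      rw [hhn, hhk, hg]
      have h2 : (2:ℝ) / Real.sqrt (((n:ℝ) * Δ - ((N:ℝ) - 1) * Δ / 2) ^ 2 + D ^ 2)
          = 1 / Real.sqrt (((n:ℝ) * Δ - ((N:ℝ) - 1) * Δ / 2) ^ 2 + D ^ 2)
          + 1 / Real.sqrt (((n:ℝ) * Δ - ((N:ℝ) - 1) * Δ / 2) ^ 2 + D ^ 2) := by ring
      rw [h2] at this
      exact this
    · -- n > k : p = (2n - (N-1)) Δ / 2 ≥ 0
      set p : ℝ := (2*(n:ℝ) - ((N:ℝ) - 1)) * Δ / 2 with hpdef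
      have hkn : (k:ℝ) ≤ (n:ℝ) := by exact_mod_cast hlt.le
      have hb2 : 0 ≤ 2*(n:ℝ) - ((N:ℝ) - 1) := by
        have hkn2 := hkn
        rw [hkcast] at hkn2
        linarith
      have hp0 : 0 ≤ p := by
        rw [hpdef]; linarith [mul_nonneg hb2 hΔ.le]
      have h12 : 12 * p^2 < D^2 := by
        have hb1 : 2*(n:ℝ) - ((N:ℝ) - 1) ≤ (N:ℝ) - 1 := by linarith
        have hm1 : (2*(n:ℝ) - ((N:ℝ) - 1))*Δ ≤ ((N:ℝ)-1)*Δ := mul_le_mul_of_nonneg_right hb1 hΔ.le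
        have hm0 : 0 ≤ (2*(n:ℝ) - ((N:ℝ) - 1))*Δ := mul_nonneg hb2 hΔ.le
        rw [hpdef]
        nlinarith [mul_self_le_mul_self hm0 hm1]
      have hgap : 2*p ≤ (x n - xb) - (x k - xb) := by
        have := gaps_aux N Δ x hx k (n - k) (by omega)
        have hc : ((n - k : ℕ):ℝ) = (n:ℝ) - (k:ℝ) := by
          have : n - k + k = n := by omega
          have := congrArg (Nat.cast : ℕ → ℝ) this
          push_cast at this
          linarith
        have heq : k + (n - k) = n := by omega
        rw [heq, hc, hkcast] at this
        rw [hpdef]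
        linarith
      have := pair_aux D p (x k - xb) (x n - xb) hD hp0 h12 hgap
      have hpsq : p^2 = ((n:ℝ) * Δ - ((N:ℝ) - 1) * Δ / 2) ^ 2 := by rw [hpdef]; ring
      rw [hpsq] at this
      rw [hhn, hhk, hg]
      have h2 : (2:ℝ) / Real.sqrt (((n:ℝ) * Δ - ((N:ℝ) - 1) * Δ / 2) ^ 2 + D ^ 2)
          = 1 / Real.sqrt (((n:ℝ) * Δ - ((N:ℝ) - 1) * Δ / 2) ^ 2 + D ^ 2)
          + 1 / Real.sqrt (((n:ℝ) * Δ - ((N:ℝ) - 1) * Δ / 2) ^ 2 + D ^ 2) := by ring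
      rw [h2] at this
      linarith
  -- sum up
  have A1 : ∑ n ∈ Finset.range N, g (N - 1 - n) = ∑ n ∈ Finset.range N, g n :=
    Finset.sum_range_reflect g N
  have A2 : ∑ n ∈ Finset.range N, h (N - 1 - n) = ∑ n ∈ Finset.range N, h n :=
    Finset.sum_range_reflect h N
  have S : ∑ n ∈ Finset.range N, (g n + g (N - 1 - n)) ≤
      ∑ n ∈ Finset.range N, (h n + h (N - 1 - n)) :=
    Finset.sum_le_sum (fun n hn => keyn n (Finset.mem_range.mp hn))
  rw [Finset.sum_add_distrib, Finset.sum_add_distrib, A1, A2] at S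
  linarith
end
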